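/- Let (Ω, F, P) be a probability space with a filtration (F_k)_{k=0,…,n} such that F₀ is P-trivial, and let (f_k)_{k=0}^n and (g_k)_{k=0}^n be integrable adapted real-valued processes with f_k ≤ g_k almost surely for every k. For stopping times ζ, η with values in {0,…,n} set H(ζ, η) = g_ζ 1_{ζ < η} + f_η 1_{η ≤ ζ}. Define J_n = f_n and, backwards for k = n−1,…,0, J_k = max(f_k, min(g_k, E[J_{k+1} | F_k])). Define η* = min(n, min{k : J_k = f_k}) and ζ* = min(n, min{k : J_k = g_k}) (each equal to n if the corresponding set is empty). Then η* and ζ* are stopping times, and for every pair of stopping times ζ, η with values in {0,…,n}: E[H(ζ*, η)] ≤ E[J₀] ≤ E[H(ζ, η*)]. In particular (ζ*, η*) is a saddle point: η* is an optimal stopping time for the buyer and ζ* is an optimal stopping time for the seller. -/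

import Mathlib

open MeasureTheory

section auxSec
set_option linter.unusedSectionVars false
variable {Ω : Type*} {m0 : MeasurableSpace Ω} {μ : Measure Ω} [IsProbabilityMeasure μ]
  {ℱ : Filtration ℕ m0}

lemma aux_meas_nat {τ : Ω → ℕ} (hτ : IsStoppingTime ℱ (fun ω => (τ ω : WithTop ℕ))) :
    Measurable τ := by
  apply measurable_to_countable'
  intro j
  have h := ℱ.le j _ (hτ.measurableSet_eq j)
  convert h using 1
  ext ω; simp

lemma aux_int_stopped (n : ℕ) {F : ℕ → Ω → ℝ} (hFi : ∀ k, k ≤ n → Integrable (F k) μ)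
    {σ : Ω → ℕ} (hσ : Measurable σ) (hσn : ∀ ω, σ ω ≤ n) :
    Integrable (fun ω => F (σ ω) ω) μ := by
  have heq : (fun ω => F (σ ω) ω) =
      fun ω => ∑ j ∈ Finset.range (n + 1), Set.indicator {ω | σ ω = j} (F j) ω := by
    funext ω
    rw [Finset.sum_eq_single (σ ω)]
    · rw [Set.indicator_of_mem (by exact rfl)]
    · intro b _ hb
      exact Set.indicator_of_notMem (fun h => hb ((Set.mem_setOf_eq ▸ h).symm)) _
    · intro h
      exact absurd (Finset.mem_range.2 (Nat.lt_succ_of_le (hσn ω))) h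
  rw [heq]
  refine integrable_finset_sum _ fun j hj => ?_
  exact (hFi j (Nat.lt_succ_iff.1 (Finset.mem_range.1 hj))).indicator
    (hσ (measurableSet_singleton j))

lemma aux_os (μ : Measure Ω) [IsProbabilityMeasure μ] (ℱ : Filtration ℕ m0) (n : ℕ)
    (J : ℕ → Ω → ℝ)
    (hJi : ∀ k, k ≤ n → Integrable (J k) μ)
    (τ : Ω → ℕ) (hτ : IsStoppingTime ℱ (fun ω => (τ ω : WithTop ℕ))) (hτn : ∀ ω, τ ω ≤ n)
    (hsub : ∀ k, k < n → ∀ᵐ ω ∂μ, k < τ ω → J k ω ≤ (μ[J (k + 1) | ℱ k]) ω) :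
    ∫ ω, J 0 ω ∂μ ≤ ∫ ω, J (τ ω) ω ∂μ := by
  have hτmeas : Measurable τ := aux_meas_nat hτ
  have hint : ∀ k, Integrable (fun ω => J (min (τ ω) k) ω) μ := fun k =>
    aux_int_stopped n hJi (hτmeas.min measurable_const)
      (fun ω => le_trans (min_le_left _ _) (hτn ω))
  have key : ∀ k, k ≤ n → ∫ ω, J 0 ω ∂μ ≤ ∫ ω, J (min (τ ω) k) ω ∂μ := by
    intro k
    induction k with
    | zero => intro _; simp
    | succ k ih =>
      intro hk1
      have hk : k < n := hk1
      refine (ih hk.le).trans ?_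
      set A : Set Ω := {ω | k < τ ω} with hA
      have hAmF : MeasurableSet[ℱ k] A := by
        have h := (hτ k).compl
        convert h using 1
        ext ω; simp [A, not_le]
      have hAm : MeasurableSet A := ℱ.le k _ hAmF
      have h1 : ∫ ω in A, J (min (τ ω) (k + 1)) ω ∂μ = ∫ ω in A, J (k + 1) ω ∂μ := by
        refine setIntegral_congr_fun hAm fun ω hω => ?_
        rw [min_eq_right (Nat.succ_le_of_lt hω)]
      have h2 : ∫ ω in Aᶜ, J (min (τ ω) (k + 1)) ω ∂μ = ∫ ω in Aᶜ, J (min (τ ω) k) ω ∂μ := by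
        refine setIntegral_congr_fun hAm.compl fun ω hω => ?_
        have hωk : τ ω ≤ k := not_lt.1 hω
        rw [min_eq_left (hωk.trans (Nat.le_succ k)), min_eq_left hωk]
      have h3 : ∫ ω in A, J (min (τ ω) k) ω ∂μ = ∫ ω in A, J k ω ∂μ := by
        refine setIntegral_congr_fun hAm fun ω hω => ?_
        rw [min_eq_right (le_of_lt hω)]
      have h4 : ∫ ω in A, J k ω ∂μ ≤ ∫ ω in A, J (k + 1) ω ∂μ := by
        rw [← setIntegral_condExp (ℱ.le k) (hJi (k + 1) hk1) hAmF]
        refine setIntegral_mono_ae_restrict ((hJi k hk.le).integrableOn)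
          (integrable_condExp.integrableOn) ?_
        refine (ae_restrict_iff' hAm).2 ?_
        filter_upwards [hsub k hk] with ω h hω using h hω
      calc ∫ ω, J (min (τ ω) k) ω ∂μ
          = ∫ ω in A, J (min (τ ω) k) ω ∂μ + ∫ ω in Aᶜ, J (min (τ ω) k) ω ∂μ :=
            (integral_add_compl hAm (hint k)).symm
        _ = ∫ ω in A, J k ω ∂μ + ∫ ω in Aᶜ, J (min (τ ω) k) ω ∂μ := by rw [h3]
        _ ≤ ∫ ω in A, J (k + 1) ω ∂μ + ∫ ω in Aᶜ, J (min (τ ω) k) ω ∂μ := by linarith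
        _ = ∫ ω in A, J (min (τ ω) (k + 1)) ω ∂μ + ∫ ω in Aᶜ, J (min (τ ω) (k + 1)) ω ∂μ := by
            rw [h1, h2]
        _ = ∫ ω, J (min (τ ω) (k + 1)) ω ∂μ := integral_add_compl hAm (hint (k + 1))
  have hkey := key n le_rfl
  simpa only [fun ω => min_eq_left (hτn ω)] using hkey

end auxSec

/-- Discrete Dynkin game as in Statement 11, with
`η* = min(n, min{k : J_k = f_k})` and `ζ* = min(n, min{k : J_k = g_k})` (each `n`
if the corresponding set is empty). Then `η*`, `ζ*` are stopping times and for all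
stopping times `ζ, η` with values in `{0,…,n}`:
`E[H(ζ*, η)] ≤ E[J₀] ≤ E[H(ζ, η*)]`, so `(ζ*, η*)` is a saddle point. -/
theorem stmt12 {Ω : Type*} {m0 : MeasurableSpace Ω} (μ : Measure Ω)
    [IsProbabilityMeasure μ]
    (ℱ : Filtration ℕ m0) (n : ℕ)
    (htrivial : ∀ s : Set Ω, MeasurableSet[ℱ 0] s → μ s = 0 ∨ μ s = 1)
    (f g : ℕ → Ω → ℝ)
    (hfa : ∀ k, Measurable[ℱ k] (f k)) (hga : ∀ k, Measurable[ℱ k] (g k))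
    (hfi : ∀ k, Integrable (f k) μ) (hgi : ∀ k, Integrable (g k) μ)
    (hfg : ∀ k, ∀ᵐ ω ∂μ, f k ω ≤ g k ω)
    (J : ℕ → Ω → ℝ) (hJn : J n = f n)
    (hJ : ∀ k < n, J k = fun ω => max (f k ω) (min (g k ω) ((μ[J (k + 1) | ℱ k]) ω)))
    (ηstar : Ω → ℕ) (hηstar : ηstar = fun ω => sInf ({k | k ≤ n ∧ J k ω = f k ω} ∪ {n}))
    (ζstar : Ω → ℕ) (hζstar : ζstar = fun ω => sInf ({k | k ≤ n ∧ J k ω = g k ω} ∪ {n})) :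
    IsStoppingTime ℱ (fun ω => (ηstar ω : WithTop ℕ)) ∧ IsStoppingTime ℱ (fun ω => (ζstar ω : WithTop ℕ)) ∧
    ∀ ζ η : Ω → ℕ, IsStoppingTime ℱ (fun ω => (ζ ω : WithTop ℕ)) → (∀ ω, ζ ω ≤ n) →
      IsStoppingTime ℱ (fun ω => (η ω : WithTop ℕ)) → (∀ ω, η ω ≤ n) →
      (∫ ω, (if ζstar ω < η ω then g (ζstar ω) ω else f (η ω) ω) ∂μ)
          ≤ ∫ ω, J 0 ω ∂μ ∧
        (∫ ω, J 0 ω ∂μ)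
          ≤ ∫ ω, (if ζ ω < ηstar ω then g (ζ ω) ω else f (ηstar ω) ω) ∂μ := by
  -- measurability of J
  have hJmeas : ∀ k, k ≤ n → Measurable[ℱ k] (J k) := by
    intro k hk
    rcases lt_or_eq_of_le hk with h | h
    · rw [hJ k h]
      exact (hfa k).max ((hga k).min stronglyMeasurable_condExp.measurable)
    · subst h; rw [hJn]; exact hfa k
  -- integrability of J
  have hJint : ∀ d k, k + d = n → Integrable (J k) μ := by
    intro d
    induction d with
    | zero =>
      intro k hk; rw [Nat.add_zero] at hk; subst hk; rw [hJn]; exact hfi _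
    | succ d ih =>
      intro k hk
      have hkn : k < n := by omega
      rw [hJ k hkn]
      have h0 := (hgi k).inf (integrable_condExp (μ := μ) (m := ℱ k) (f := J (k + 1)))
      have h1 : Integrable (fun ω => min (g k ω) ((μ[J (k + 1)|ℱ k]) ω)) μ := by
        exact h0
      have h2 := (hfi k).sup h1
      exact h2
  have hJint' : ∀ k, k ≤ n → Integrable (J k) μ := fun k hk => hJint (n - k) k (by omega)
  -- pointwise facts
  have hfJ : ∀ k, k ≤ n → ∀ ω, f k ω ≤ J k ω := by
    intro k hk ω
    rcases lt_or_eq_of_le hk with h | h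
    · simp only [hJ k h]; exact le_max_left _ _
    · subst h; rw [hJn]
  have hJg : ∀ᵐ ω ∂μ, ∀ k, k ≤ n → J k ω ≤ g k ω := by
    rw [ae_all_iff]
    intro k
    by_cases hk : k ≤ n
    · rcases lt_or_eq_of_le hk with h | h
      · filter_upwards [hfg k] with ω hω _
        simp only [hJ k h]
        exact max_le hω (min_le_left _ _)
      · subst h
        filter_upwards [hfg k] with ω hω _
        rw [hJn]; exact hω
    · filter_upwards with ω h
      exact absurd h hk
  have hηbd : ∀ ω, ηstar ω ≤ n := by
    intro ω; rw [hηstar]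
    exact Nat.sInf_le ((Set.mem_union _ _ _).2 (Or.inr rfl))
  have hζbd : ∀ ω, ζstar ω ≤ n := by
    intro ω; rw [hζstar]
    exact Nat.sInf_le ((Set.mem_union _ _ _).2 (Or.inr rfl))
  have hηfix : ∀ ω, J (ηstar ω) ω = f (ηstar ω) ω := by
    intro ω
    have hne : ({k | k ≤ n ∧ J k ω = f k ω} ∪ {n} : Set ℕ).Nonempty :=
      ⟨n, (Set.mem_union _ _ _).2 (Or.inr rfl)⟩
    have hmem := Nat.sInf_mem hne
    simp only [hηstar]
    rcases (Set.mem_union _ _ _).1 hmem with h | h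
    · exact h.2
    · rw [Set.mem_singleton_iff] at h
      rw [h, hJn]
  have hζfix : ∀ ω, ζstar ω < n → J (ζstar ω) ω = g (ζstar ω) ω := by
    intro ω hlt
    simp only [hζstar] at hlt ⊢
    have hne : ({k | k ≤ n ∧ J k ω = g k ω} ∪ {n} : Set ℕ).Nonempty :=
      ⟨n, (Set.mem_union _ _ _).2 (Or.inr rfl)⟩
    have hmem := Nat.sInf_mem hne
    rcases (Set.mem_union _ _ _).1 hmem with h | h
    · exact h.2
    · rw [Set.mem_singleton_iff] at h
      rw [h] at hlt
      exact absurd hlt (lt_irrefl n)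
  -- stopping times
  have hηST : IsStoppingTime ℱ (fun ω => (ηstar ω : WithTop ℕ)) := by
    intro k
    suffices hs : MeasurableSet[ℱ k] {ω | ηstar ω ≤ k} by
      convert hs using 1; ext ω; simp
    by_cases hkn : n ≤ k
    · have huniv : {ω | ηstar ω ≤ k} = Set.univ :=
        Set.eq_univ_of_forall fun ω => (hηbd ω).trans hkn
      rw [huniv]; exact MeasurableSet.univ
    · push_neg at hkn
      have hset : {ω | ηstar ω ≤ k} = ⋃ j ∈ Finset.range (k + 1), {ω | J j ω = f j ω} := by
        ext ω
        simp only [Set.mem_setOf_eq, Set.mem_iUnion, Finset.mem_range, Nat.lt_succ_iff,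
          hηstar, exists_prop]
        constructor
        · intro h
          have hne : ({j | j ≤ n ∧ J j ω = f j ω} ∪ {n} : Set ℕ).Nonempty :=
            ⟨n, (Set.mem_union _ _ _).2 (Or.inr rfl)⟩
          have hmem := Nat.sInf_mem hne
          rcases (Set.mem_union _ _ _).1 hmem with h' | h'
          · exact ⟨_, h, h'.2⟩
          · rw [Set.mem_singleton_iff] at h'
            rw [h'] at h
            exact absurd h (not_le.2 hkn)
        · rintro ⟨j, hjk, hj⟩
          exact le_trans (Nat.sInf_le ((Set.mem_union _ _ _).2
            (Or.inl ⟨le_of_lt (lt_of_le_of_lt hjk hkn), hj⟩))) hjk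
      rw [hset]
      refine Finset.measurableSet_biUnion _ fun j hj => ?_
      have hjk : j ≤ k := Nat.lt_succ_iff.1 (Finset.mem_range.1 hj)
      have hjn : j ≤ n := le_of_lt (lt_of_le_of_lt hjk hkn)
      exact ℱ.mono hjk _ (measurableSet_eq_fun (hJmeas j hjn) (hfa j))
  have hζST : IsStoppingTime ℱ (fun ω => (ζstar ω : WithTop ℕ)) := by
    intro k
    suffices hs : MeasurableSet[ℱ k] {ω | ζstar ω ≤ k} by
      convert hs using 1; ext ω; simp
    by_cases hkn : n ≤ k
    · have huniv : {ω | ζstar ω ≤ k} = Set.univ :=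
        Set.eq_univ_of_forall fun ω => (hζbd ω).trans hkn
      rw [huniv]; exact MeasurableSet.univ
    · push_neg at hkn
      have hset : {ω | ζstar ω ≤ k} = ⋃ j ∈ Finset.range (k + 1), {ω | J j ω = g j ω} := by
        ext ω
        simp only [Set.mem_setOf_eq, Set.mem_iUnion, Finset.mem_range, Nat.lt_succ_iff,
          hζstar, exists_prop]
        constructor
        · intro h
          have hne : ({j | j ≤ n ∧ J j ω = g j ω} ∪ {n} : Set ℕ).Nonempty :=
            ⟨n, (Set.mem_union _ _ _).2 (Or.inr rfl)⟩
          have hmem := Nat.sInf_mem hne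
          rcases (Set.mem_union _ _ _).1 hmem with h' | h'
          · exact ⟨_, h, h'.2⟩
          · rw [Set.mem_singleton_iff] at h'
            rw [h'] at h
            exact absurd h (not_le.2 hkn)
        · rintro ⟨j, hjk, hj⟩
          exact le_trans (Nat.sInf_le ((Set.mem_union _ _ _).2
            (Or.inl ⟨le_of_lt (lt_of_le_of_lt hjk hkn), hj⟩))) hjk
      rw [hset]
      refine Finset.measurableSet_biUnion _ fun j hj => ?_
      have hjk : j ≤ k := Nat.lt_succ_iff.1 (Finset.mem_range.1 hj)
      have hjn : j ≤ n := le_of_lt (lt_of_le_of_lt hjk hkn)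
      exact ℱ.mono hjk _ (measurableSet_eq_fun (hJmeas j hjn) (hga j))
  -- submartingale inequality before ηstar
  have hsubη : ∀ k, k < n → ∀ ω, k < ηstar ω → J k ω ≤ (μ[J (k + 1)|ℱ k]) ω := by
    intro k hkn ω hk
    have hne : J k ω ≠ f k ω := by
      intro h
      have hle : ηstar ω ≤ k := by
        rw [hηstar]
        exact Nat.sInf_le ((Set.mem_union _ _ _).2 (Or.inl ⟨le_of_lt hkn, h⟩))
      omega
    rcases max_choice (f k ω) (min (g k ω) ((μ[J (k + 1)|ℱ k]) ω)) with h | h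
    · exfalso; apply hne; rw [hJ k hkn]; exact h
    · calc J k ω = min (g k ω) ((μ[J (k + 1)|ℱ k]) ω) := by rw [hJ k hkn]; exact h
        _ ≤ _ := min_le_right _ _
  -- supermartingale inequality before ζstar
  have hsupζ : ∀ k, k < n → ∀ᵐ ω ∂μ, k < ζstar ω → (μ[J (k + 1)|ℱ k]) ω ≤ J k ω := by
    intro k hkn
    filter_upwards [hfg k] with ω hfgω hk
    have hne : J k ω ≠ g k ω := by
      intro h
      have hle : ζstar ω ≤ k := by
        rw [hζstar]
        exact Nat.sInf_le ((Set.mem_union _ _ _).2 (Or.inl ⟨le_of_lt hkn, h⟩))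
      omega
    by_cases hE : (μ[J (k + 1)|ℱ k]) ω ≤ g k ω
    · calc (μ[J (k + 1)|ℱ k]) ω = min (g k ω) ((μ[J (k + 1)|ℱ k]) ω) := (min_eq_right hE).symm
        _ ≤ max (f k ω) (min (g k ω) ((μ[J (k + 1)|ℱ k]) ω)) := le_max_right _ _
        _ = J k ω := by rw [hJ k hkn]
    · exfalso
      apply hne
      rw [hJ k hkn]
      show max (f k ω) (min (g k ω) ((μ[J (k + 1)|ℱ k]) ω)) = g k ω
      rw [min_eq_left (le_of_lt (not_le.1 hE)), max_eq_right hfgω]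
  refine ⟨hηST, hζST, ?_⟩
  intro ζ η hζ hζn hη hηn
  have hζm : Measurable ζ := aux_meas_nat hζ
  have hηm : Measurable η := aux_meas_nat hη
  have hηSTm : Measurable ηstar := aux_meas_nat hηST
  have hζSTm : Measurable ζstar := aux_meas_nat hζST
  constructor
  · -- lower bound: E[H(ζ*, η)] ≤ E[J 0]
    set τ : Ω → ℕ := fun ω => min (ζstar ω) (η ω) with hτdef
    have hτ : IsStoppingTime ℱ (fun ω => (τ ω : WithTop ℕ)) := by
      have h := hζST.min hη
      have e : (fun ω => (τ ω : WithTop ℕ)) = fun ω => min (ζstar ω : WithTop ℕ) (η ω) := by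
        funext ω; exact WithTop.coe_min _ _
      rw [e]; exact h
    have hτn : ∀ ω, τ ω ≤ n := fun ω => le_trans (min_le_right _ _) (hηn ω)
    have hsubneg : ∀ k, k < n → ∀ᵐ ω ∂μ, k < τ ω →
        (fun k => -(J k)) k ω ≤ (μ[(fun k => -(J k)) (k + 1)|ℱ k]) ω := by
      intro k hkn
      filter_upwards [hsupζ k hkn, condExp_neg (m := ℱ k) (μ := μ) (J (k + 1))] with ω h1 h2 hk
      have hk' : k < ζstar ω := lt_of_lt_of_le hk (min_le_left _ _)
      show (-(J k)) ω ≤ (μ[-(J (k + 1))|ℱ k]) ω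
      rw [h2]
      simp only [Pi.neg_apply]
      exact neg_le_neg (h1 hk')
    have hneg := aux_os μ ℱ n (fun k => -(J k)) (fun k hk => (hJint' k hk).neg) τ hτ hτn hsubneg
    have hOS : ∫ ω, J (τ ω) ω ∂μ ≤ ∫ ω, J 0 ω ∂μ := by
      simp only [Pi.neg_apply] at hneg
      rw [integral_neg, integral_neg] at hneg
      linarith
    have h1 : Integrable (fun ω => g (ζstar ω) ω) μ :=
      aux_int_stopped n (fun k _ => hgi k) hζSTm hζbd
    have h2 : Integrable (fun ω => f (η ω) ω) μ :=
      aux_int_stopped n (fun k _ => hfi k) hηm hηn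
    have hs : MeasurableSet {ω | ζstar ω < η ω} := measurableSet_lt hζSTm hηm
    have hHint : Integrable (fun ω => if ζstar ω < η ω then g (ζstar ω) ω else f (η ω) ω) μ := by
      have heq : (fun ω => if ζstar ω < η ω then g (ζstar ω) ω else f (η ω) ω) =
          fun ω => Set.indicator {ω | ζstar ω < η ω} (fun ω => g (ζstar ω) ω) ω
            + Set.indicator {ω | ζstar ω < η ω}ᶜ (fun ω => f (η ω) ω) ω := by
        funext ω
        by_cases h : ζstar ω < η ω <;>
          simp [Set.indicator_apply, Set.mem_setOf_eq, Set.mem_compl_iff, h]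
      rw [heq]
      exact (h1.indicator hs).add (h2.indicator hs.compl)
    have hJτint : Integrable (fun ω => J (τ ω) ω) μ :=
      aux_int_stopped n hJint' (hζSTm.min hηm) hτn
    refine le_trans (integral_mono hHint hJτint ?_) hOS
    intro ω
    by_cases h : ζstar ω < η ω
    · simp only [if_pos h]
      have hτω : τ ω = ζstar ω := min_eq_left (le_of_lt h)
      rw [hτω, hζfix ω (lt_of_lt_of_le h (hηn ω))]
    · simp only [if_neg h]
      have hτω : τ ω = η ω := min_eq_right (not_lt.1 h)
      rw [hτω]
      exact hfJ (η ω) (hηn ω) ω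
  · -- upper bound: E[J 0] ≤ E[H(ζ, η*)]
    set τ : Ω → ℕ := fun ω => min (ζ ω) (ηstar ω) with hτdef
    have hτ : IsStoppingTime ℱ (fun ω => (τ ω : WithTop ℕ)) := by
      have h := hζ.min hηST
      have e : (fun ω => (τ ω : WithTop ℕ)) = fun ω => min (ζ ω : WithTop ℕ) (ηstar ω) := by
        funext ω; exact WithTop.coe_min _ _
      rw [e]; exact h
    have hτn : ∀ ω, τ ω ≤ n := fun ω => le_trans (min_le_left _ _) (hζn ω)
    have hOS : ∫ ω, J 0 ω ∂μ ≤ ∫ ω, J (τ ω) ω ∂μ := by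
      refine aux_os μ ℱ n J hJint' τ hτ hτn ?_
      intro k hkn
      filter_upwards with ω hk
      exact hsubη k hkn ω (lt_of_lt_of_le hk (min_le_right _ _))
    have h1 : Integrable (fun ω => g (ζ ω) ω) μ :=
      aux_int_stopped n (fun k _ => hgi k) hζm hζn
    have h2 : Integrable (fun ω => f (ηstar ω) ω) μ :=
      aux_int_stopped n (fun k _ => hfi k) hηSTm hηbd
    have hs : MeasurableSet {ω | ζ ω < ηstar ω} := measurableSet_lt hζm hηSTm
    have hHint : Integrable (fun ω => if ζ ω < ηstar ω then g (ζ ω) ω else f (ηstar ω) ω) μ := by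
      have heq : (fun ω => if ζ ω < ηstar ω then g (ζ ω) ω else f (ηstar ω) ω) =
          fun ω => Set.indicator {ω | ζ ω < ηstar ω} (fun ω => g (ζ ω) ω) ω
            + Set.indicator {ω | ζ ω < ηstar ω}ᶜ (fun ω => f (ηstar ω) ω) ω := by
        funext ω
        by_cases h : ζ ω < ηstar ω <;>
          simp [Set.indicator_apply, Set.mem_setOf_eq, Set.mem_compl_iff, h]
      rw [heq]
      exact (h1.indicator hs).add (h2.indicator hs.compl)
    have hJτint : Integrable (fun ω => J (τ ω) ω) μ :=
      aux_int_stopped n hJint' (hζm.min hηSTm) hτn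
    refine hOS.trans (integral_mono_ae hJτint hHint ?_)
    filter_upwards [hJg] with ω hJgω
    by_cases h : ζ ω < ηstar ω
    · simp only [if_pos h]
      have hτω : τ ω = ζ ω := min_eq_left (le_of_lt h)
      rw [hτω]
      exact hJgω (ζ ω) (hζn ω)
    · simp only [if_neg h]
      have hτω : τ ω = ηstar ω := min_eq_right (not_lt.1 h)
      rw [hτω, hηfix ω]
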